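/- For all positive reals a, b, c, the function x ↦ θ(a, b, x) has derivative −(a + b + 2·c)·√(a·b) / ((c² + a·b + a·c + b·c)·√c·√(a+b+c)) at the point x = c. (This is the partial derivative formula ∂_c c_b^a computed in the proof of Lemma 2.2 of the paper: varying the central radius only.) -/

import Mathlib

/-- The tangency angle at the center of a sphere of radius `c` subtended by the
centers of spheres of radii `a` and `b`, all three pairwise tangent. -/
noncomputable def theta (a b c : ℝ) : ℝ :=
  Real.arccos (((c + a) ^ 2 + (c + b) ^ 2 - (a + b) ^ 2) / (2 * (c + a) * (c + b)))

theorem hasDerivAt_theta_center (a b c : ℝ) (ha : 0 < a) (hb : 0 < b) (hc : 0 < c) :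
    HasDerivAt (fun x => theta a b x)
      (-((a + b + 2 * c) * Real.sqrt (a * b)) /
        ((c ^ 2 + a * b + a * c + b * c) * Real.sqrt c * Real.sqrt (a + b + c))) c := by
  have hca : (0:ℝ) < c + a := by linarith
  have hcb : (0:ℝ) < c + b := by linarith
  have hD : (0:ℝ) < 2 * (c + a) * (c + b) := by positivity
  set u : ℝ := ((c + a) ^ 2 + (c + b) ^ 2 - (a + b) ^ 2) / (2 * (c + a) * (c + b)) with hu
  -- derivative of the inner rational function
  have hnum : HasDerivAt (fun x : ℝ => (x + a) ^ 2 + (x + b) ^ 2 - (a + b) ^ 2)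
      (2 * (c + a) + 2 * (c + b)) c := by
    have h1 : HasDerivAt (fun x : ℝ => (x + a) ^ 2) (2 * (c + a)) c := by
      simpa using ((hasDerivAt_id c).add_const a).fun_pow 2
    have h2 : HasDerivAt (fun x : ℝ => (x + b) ^ 2) (2 * (c + b)) c := by
      simpa using ((hasDerivAt_id c).add_const b).fun_pow 2
    simpa using (h1.add h2).sub_const ((a + b) ^ 2)
  have hden : HasDerivAt (fun x : ℝ => 2 * (x + a) * (x + b))
      (2 * (c + b) + 2 * (c + a)) c := by
    have h1 : HasDerivAt (fun x : ℝ => 2 * (x + a)) 2 c := by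
      simpa using ((hasDerivAt_id c).add_const a).const_mul 2
    have := h1.fun_mul ((hasDerivAt_id c).add_const b)
    simpa [mul_comm, mul_add, add_comm] using this
  have hDne : 2 * (c + a) * (c + b) ≠ 0 := ne_of_gt hD
  have hg : HasDerivAt (fun x : ℝ =>
      ((x + a) ^ 2 + (x + b) ^ 2 - (a + b) ^ 2) / (2 * (x + a) * (x + b)))
      (((2 * (c + a) + 2 * (c + b)) * (2 * (c + a) * (c + b)) -
        ((c + a) ^ 2 + (c + b) ^ 2 - (a + b) ^ 2) * (2 * (c + b) + 2 * (c + a))) /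
        (2 * (c + a) * (c + b)) ^ 2) c := hnum.div hden hDne
  -- u strictly between -1 and 1
  have hu1 : u < 1 := by
    rw [hu, div_lt_one hD]; nlinarith
  have hum1 : -1 < u := by
    rw [hu, neg_lt, ← neg_div, div_lt_one hD]; nlinarith
  have harccos := Real.hasDerivAt_arccos (ne_of_gt hum1) (ne_of_lt hu1)
  have hcomp := harccos.comp c hg
  convert hcomp using 1
  · rfl
  · rfl
  · rfl
  -- now pure algebra with square roots
  have hS1 : Real.sqrt (a * b) ^ 2 = a * b := Real.sq_sqrt (by positivity)
  have hS2 : Real.sqrt c ^ 2 = c := Real.sq_sqrt hc.le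
  have hS3 : Real.sqrt (a + b + c) ^ 2 = a + b + c := Real.sq_sqrt (by positivity)
  have hS1p : 0 < Real.sqrt (a * b) := Real.sqrt_pos.mpr (by positivity)
  have hS2p : 0 < Real.sqrt c := Real.sqrt_pos.mpr hc
  have hS3p : 0 < Real.sqrt (a + b + c) := Real.sqrt_pos.mpr (by positivity)
  have hskey : Real.sqrt (1 - u ^ 2)
      = 4 * Real.sqrt (a * b) * Real.sqrt c * Real.sqrt (a + b + c) / (2 * (c + a) * (c + b)) := by
    have h1 : 1 - u ^ 2
        = (4 * Real.sqrt (a * b) * Real.sqrt c * Real.sqrt (a + b + c) / (2 * (c + a) * (c + b))) ^ 2 := by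
      have h2 : (4 * Real.sqrt (a * b) * Real.sqrt c * Real.sqrt (a + b + c)) ^ 2
          = 16 * (a * b) * c * (a + b + c) := by
        rw [mul_pow, mul_pow, mul_pow, hS1, hS2, hS3]; ring
      rw [hu, div_pow, div_pow, h2]
      field_simp
      ring
    rw [h1, Real.sqrt_sq (by positivity)]
  rw [hskey]
  have hpoly : (0:ℝ) < c ^ 2 + a * b + a * c + b * c := by positivity
  set S1 := Real.sqrt (a * b)
  set S2 := Real.sqrt c
  set S3 := Real.sqrt (a + b + c)
  rw [show (2 * (c + a) + 2 * (c + b)) * (2 * (c + a) * (c + b)) -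
      ((c + a) ^ 2 + (c + b) ^ 2 - (a + b) ^ 2) * (2 * (c + b) + 2 * (c + a))
      = 8 * (a * b) * (a + b + 2 * c) from by ring,
    show c ^ 2 + a * b + a * c + b * c = (c + a) * (c + b) from by ring,
    show a * b = S1 ^ 2 from hS1.symm]
  field_simp
  ring
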